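/- Let G be a graph with an EPG-representation in a grid with h rows such that every grid-edge belongs to at most c vertex-paths. Then the pathwidth of G satisfies pw(G) ≤ c(3h − 1) − 1. -/

import Mathlib

/-- Two grid points are adjacent (at distance 1). -/
def adjPt (p q : ℤ × ℤ) : Prop :=
  (p.1 = q.1 ∧ (p.2 - q.2 = 1 ∨ q.2 - p.2 = 1)) ∨
  (p.2 = q.2 ∧ (p.1 - q.1 = 1 ∨ q.1 - p.1 = 1))

/-- A (simple) path in the rectangular integer grid. -/
structure GridPath where
  len : ℕ
  pts : Fin (len + 1) → ℤ × ℤ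
  adj : ∀ i : Fin len, adjPt (pts i.castSucc) (pts i.succ)
  inj : Function.Injective pts

/-- The set of grid-edges used by a grid path. -/
def GridPath.edges (P : GridPath) : Set (Sym2 (ℤ × ℤ)) :=
  {e | ∃ i : Fin P.len, e = s(P.pts i.castSucc, P.pts i.succ)}

/-- The set of grid-points used by a grid path. -/
def GridPath.points (P : GridPath) : Set (ℤ × ℤ) :=
  Set.range P.pts

/-- The grid path lies inside the `w × h` grid. -/
def GridPath.InGrid (P : GridPath) (w h : ℕ) : Prop :=
  ∀ p ∈ P.points, 1 ≤ p.1 ∧ p.1 ≤ (w : ℤ) ∧ 1 ≤ p.2 ∧ p.2 ≤ (h : ℤ)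

/-- An EPG-representation: vertices are adjacent iff their paths share a grid-edge. -/
def IsEPGRep {V : Type*} (G : SimpleGraph V) (rep : V → GridPath) : Prop :=
  ∀ v w : V, G.Adj v w ↔ v ≠ w ∧ ((rep v).edges ∩ (rep w).edges).Nonempty


/-- `l, r` give an interval representation of the graph `H`. -/
def IsIntervalRep {V : Type*} (H : SimpleGraph V) (l r : V → ℝ) : Prop :=
  (∀ v, l v ≤ r v) ∧
  ∀ v w : V, H.Adj v w ↔
    v ≠ w ∧ (Set.Icc (l v) (r v) ∩ Set.Icc (l w) (r w)).Nonempty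

/-- `H` is an interval graph. -/
def IsIntervalGraph {V : Type*} (H : SimpleGraph V) : Prop :=
  ∃ l r : V → ℝ, IsIntervalRep H l r

/-- `pwLE G k` means the pathwidth of `G` is at most `k`: `G` is a subgraph of a
`(k+1)`-colourable interval graph. -/
def pwLE {V : Type*} (G : SimpleGraph V) (k : ℕ) : Prop :=
  ∃ H : SimpleGraph V, G ≤ H ∧ IsIntervalGraph H ∧ H.Colorable (k + 1)



/-! ### Auxiliary machinery -/

section GreedyAux

noncomputable def greedyCol {V : Type*} (H : SimpleGraph V) (ord : V → ℕ) (K : ℕ) (v : V) : ℕ :=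
  sInf {m | m < K ∧ ∀ u, H.Adj u v → ord u < ord v → greedyCol H ord K u ≠ m}
termination_by ord v
decreasing_by exact ‹ord u < ord v›

lemma greedyCol_mem {V : Type*} [Fintype V] (H : SimpleGraph V) (ord : V → ℕ) (K : ℕ) (v : V)
    (hdeg : {u | H.Adj u v ∧ ord u < ord v}.ncard < K) :
    greedyCol H ord K v ∈
      {m | m < K ∧ ∀ u, H.Adj u v → ord u < ord v → greedyCol H ord K u ≠ m} := by
  classical
  rw [greedyCol]
  apply Nat.sInf_mem
  set E : Finset V := Finset.univ.filter (fun u => H.Adj u v ∧ ord u < ord v) with hE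
  have hEcard : E.card < K := by
    have : {u | H.Adj u v ∧ ord u < ord v}.ncard = E.card := by
      rw [hE, Set.ncard_eq_toFinset_card']
      congr 1
      ext u; simp
    omega
  set used : Finset ℕ := E.image (greedyCol H ord K) with hused
  have husedcard : used.card < K := lt_of_le_of_lt (Finset.card_image_le) hEcard
  have hne : (Finset.range K \ used).Nonempty := by
    rw [← Finset.card_pos]
    have := Finset.le_card_sdiff used (Finset.range K)
    rw [Finset.card_range] at this
    omega
  obtain ⟨m, hm⟩ := hne
  rw [Finset.mem_sdiff, Finset.mem_range] at hm
  refine ⟨m, hm.1, fun u hadj hlt heq => hm.2 ?_⟩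
  rw [hused]
  exact Finset.mem_image.2 ⟨u, by simp [hE, hadj, hlt], heq⟩

theorem greedy_colorable {V : Type*} [Fintype V] (H : SimpleGraph V) (ord : V → ℕ)
    (hord : Function.Injective ord) (K : ℕ)
    (hdeg : ∀ v, {u | H.Adj u v ∧ ord u < ord v}.ncard < K) :
    H.Colorable K := by
  have key := fun v => greedyCol_mem H ord K v (hdeg v)
  refine ⟨SimpleGraph.Coloring.mk (fun v => ⟨greedyCol H ord K v, (key v).1⟩) ?_⟩
  intro v w hadj heq
  have hne : ord v ≠ ord w := fun h => (H.ne_of_adj hadj) (hord h)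
  have heq' : greedyCol H ord K v = greedyCol H ord K w := by
    simpa [Fin.ext_iff] using heq
  rcases lt_or_gt_of_ne hne with hlt | hlt
  · exact (key w).2 v hadj hlt heq'
  · exact (key v).2 w hadj.symm hlt heq'.symm

end GreedyAux

section GridAux

lemma ivt_aux (f : ℕ → ℤ) (hf : ∀ k, f (k+1) ≤ f k + 1) {i j : ℕ} (hij : i ≤ j) {t : ℤ}
    (h1 : f i ≤ t) (h2 : t ≤ f j) : ∃ k, k ≤ j ∧ f k = t := by
  classical
  set s : Finset ℕ := (Finset.Icc i j).filter (fun k => f k ≤ t) with hs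
  have hsne : s.Nonempty := ⟨i, by simp [hs, hij, h1]⟩
  obtain ⟨k, hks, hmax⟩ : ∃ k ∈ s, ∀ m ∈ s, m ≤ k :=
    ⟨s.max' hsne, s.max'_mem hsne, fun m hm => s.le_max' m hm⟩
  have hkj : k ≤ j := by
    have := (Finset.mem_filter.1 hks).1
    exact (Finset.mem_Icc.1 this).2
  have hfk : f k ≤ t := (Finset.mem_filter.1 hks).2
  rcases eq_or_lt_of_le hkj with rfl | hlt
  · exact ⟨k, le_rfl, le_antisymm hfk h2⟩
  · have hk1 : k + 1 ∉ s := by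
      intro hmem
      have := hmax _ hmem
      omega
    have hik : i ≤ k := (Finset.mem_Icc.1 (Finset.mem_filter.1 hks).1).1
    have : ¬ (f (k+1) ≤ t) := by
      intro hle
      exact hk1 (Finset.mem_filter.2 ⟨Finset.mem_Icc.2 ⟨by omega, by omega⟩, hle⟩)
    have := hf k
    exact ⟨k, hkj, by omega⟩

lemma adjPt_dx {p q : ℤ × ℤ} (h : adjPt p q) : p.1 - q.1 = 1 ∨ p.1 = q.1 ∨ q.1 - p.1 = 1 := by
  rcases h with ⟨h1, _⟩ | ⟨_, h2⟩
  · tauto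
  · tauto

lemma path_hits (P : GridPath) (x₀ : ℤ) (hmin : ∃ i, (P.pts i).1 ≤ x₀)
    (hmax : ∃ i, x₀ ≤ (P.pts i).1) : ∃ i, (P.pts i).1 = x₀ := by
  set f : ℕ → ℤ := fun k => (P.pts ⟨min k P.len, by omega⟩).1 with hfdef
  have hstep : ∀ k, f (k+1) ≤ f k + 1 ∧ f k ≤ f (k+1) + 1 := by
    intro k
    by_cases hk : k < P.len
    · have hadj := P.adj ⟨k, hk⟩
      have h1 : (⟨min k P.len, by omega⟩ : Fin (P.len+1)) = (⟨k, hk⟩ : Fin P.len).castSucc := by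
        apply Fin.ext; simp [Fin.castSucc]; omega
      have h2 : (⟨min (k+1) P.len, by omega⟩ : Fin (P.len+1)) = (⟨k, hk⟩ : Fin P.len).succ := by
        apply Fin.ext; simp [Fin.succ]; omega
      have := adjPt_dx hadj
      simp only [hfdef, h1, h2]
      omega
    · have : min k P.len = min (k+1) P.len := by omega
      simp only [hfdef, this]
      omega
  obtain ⟨i₀, hi₀⟩ := hmin
  obtain ⟨i₁, hi₁⟩ := hmax
  have hfi : ∀ i : Fin (P.len + 1), f i.val = (P.pts i).1 := by
    intro i
    have hlt := i.isLt
    have hidx : (⟨min i.val P.len, by omega⟩ : Fin (P.len+1)) = i := by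
      apply Fin.ext; simp; omega
    simp only [hfdef, hidx]
  rcases le_total i₀.val i₁.val with hij | hij
  · obtain ⟨k, hkj, hfk⟩ := ivt_aux f (fun k => (hstep k).1) hij (t := x₀)
      (by rw [hfi]; exact hi₀) (by rw [hfi]; exact hi₁)
    exact ⟨⟨min k P.len, by omega⟩, hfk⟩
  · obtain ⟨k, hkj, hfk⟩ := ivt_aux (fun k => - f k)
      (fun k => by have := (hstep k).2; omega) hij (t := -x₀)
      (by simp only [neg_le_neg_iff, hfi]; exact hi₁)
      (by simp only [neg_le_neg_iff, hfi]; exact hi₀)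
    have hfk' : f k = x₀ := by
      have : -f k = -x₀ := hfk
      omega
    exact ⟨⟨min k P.len, by omega⟩, hfk'⟩

lemma exists_incident_edge (P : GridPath) (hlen : 1 ≤ P.len) (i : Fin (P.len + 1)) :
    ∃ p q, s(p,q) ∈ P.edges ∧ adjPt p q ∧ p ∈ P.points ∧ q ∈ P.points ∧
      (p = P.pts i ∨ q = P.pts i) := by
  by_cases h : i.val < P.len
  · refine ⟨P.pts (⟨i.val, h⟩ : Fin P.len).castSucc, P.pts (⟨i.val, h⟩ : Fin P.len).succ,
      ⟨⟨i.val, h⟩, rfl⟩, P.adj _, ⟨_, rfl⟩, ⟨_, rfl⟩, Or.inl ?_⟩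
    have hidx : (⟨i.val, h⟩ : Fin P.len).castSucc = i := by
      apply Fin.ext; simp
    rw [hidx]
  · have hi : i.val = P.len := by omega
    refine ⟨P.pts (⟨i.val - 1, by omega⟩ : Fin P.len).castSucc,
      P.pts (⟨i.val - 1, by omega⟩ : Fin P.len).succ,
      ⟨⟨i.val - 1, by omega⟩, rfl⟩, P.adj _, ⟨_, rfl⟩, ⟨_, rfl⟩, Or.inr ?_⟩
    have hidx : (⟨i.val - 1, by omega⟩ : Fin P.len).succ = i := by
      apply Fin.ext; simp [Fin.succ]; omega
    rw [hidx]

noncomputable def Fset (x₀ : ℤ) (h : ℕ) : Finset (Sym2 (ℤ × ℤ)) :=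
  ((Finset.Icc (1:ℤ) ((h:ℤ)-1)).image fun j => s(((x₀,j) : ℤ×ℤ), ((x₀,j+1) : ℤ×ℤ))) ∪
  ((Finset.Icc (1:ℤ) (h:ℤ)).image fun j => s(((x₀-1,j) : ℤ×ℤ), ((x₀,j) : ℤ×ℤ))) ∪
  ((Finset.Icc (1:ℤ) (h:ℤ)).image fun j => s(((x₀,j) : ℤ×ℤ), ((x₀+1,j) : ℤ×ℤ)))

lemma Fset_card (x₀ : ℤ) (h : ℕ) : (Fset x₀ h).card ≤ 3 * h - 1 := by
  have h1 := Finset.card_union_le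
    (((Finset.Icc (1:ℤ) ((h:ℤ)-1)).image fun j => s(((x₀,j) : ℤ×ℤ), ((x₀,j+1) : ℤ×ℤ))) ∪
     ((Finset.Icc (1:ℤ) (h:ℤ)).image fun j => s(((x₀-1,j) : ℤ×ℤ), ((x₀,j) : ℤ×ℤ))))
    ((Finset.Icc (1:ℤ) (h:ℤ)).image fun j => s(((x₀,j) : ℤ×ℤ), ((x₀+1,j) : ℤ×ℤ)))
  have h2 := Finset.card_union_le
    ((Finset.Icc (1:ℤ) ((h:ℤ)-1)).image fun j => s(((x₀,j) : ℤ×ℤ), ((x₀,j+1) : ℤ×ℤ)))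
    ((Finset.Icc (1:ℤ) (h:ℤ)).image fun j => s(((x₀-1,j) : ℤ×ℤ), ((x₀,j) : ℤ×ℤ)))
  have c1 := Finset.card_image_le (s := Finset.Icc (1:ℤ) ((h:ℤ)-1))
    (f := fun j => s(((x₀,j) : ℤ×ℤ), ((x₀,j+1) : ℤ×ℤ)))
  have c2 := Finset.card_image_le (s := Finset.Icc (1:ℤ) (h:ℤ))
    (f := fun j => s(((x₀-1,j) : ℤ×ℤ), ((x₀,j) : ℤ×ℤ)))
  have c3 := Finset.card_image_le (s := Finset.Icc (1:ℤ) (h:ℤ))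
    (f := fun j => s(((x₀,j) : ℤ×ℤ), ((x₀+1,j) : ℤ×ℤ)))
  have i1 : (Finset.Icc (1:ℤ) ((h:ℤ)-1)).card = ((h:ℤ) - 1).toNat := by
    rw [Int.card_Icc]; congr 1; ring
  have i2 : (Finset.Icc (1:ℤ) (h:ℤ)).card = (h:ℤ).toNat := by
    rw [Int.card_Icc]; congr 1; ring
  unfold Fset
  omega

lemma edge_in_Fset (P : GridPath) (h : ℕ) (x₀ : ℤ)
    (hy : ∀ p ∈ P.points, 1 ≤ p.2 ∧ p.2 ≤ (h:ℤ)) (hlen : 1 ≤ P.len)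
    (hx : ∃ i, (P.pts i).1 = x₀) :
    ∃ ed ∈ Fset x₀ h, ed ∈ P.edges := by
  obtain ⟨i, hi⟩ := hx
  obtain ⟨p, q, hedge, hadj, hp, hq, hpq⟩ := exists_incident_edge P hlen i
  have hyp := hy p hp
  have hyq := hy q hq
  refine ⟨s(p,q), ?_, hedge⟩
  simp only [Fset, Finset.mem_union, Finset.mem_image, Finset.mem_Icc]
  rcases hadj with ⟨h1, h2⟩ | ⟨h1, h2⟩
  · have hx0 : p.1 = x₀ ∧ q.1 = x₀ := by
      rcases hpq with rfl | rfl
      · exact ⟨hi, by omega⟩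
      · exact ⟨by omega, hi⟩
    left; left
    rcases h2 with h2 | h2
    · refine ⟨q.2, by omega, ?_⟩
      have hq' : ((x₀, q.2) : ℤ×ℤ) = q := Prod.ext (hx0.2.symm) rfl
      have hp' : ((x₀, q.2+1) : ℤ×ℤ) = p := Prod.ext (hx0.1.symm) (by omega)
      rw [hq', hp']
      exact Sym2.eq_swap
    · refine ⟨p.2, by omega, ?_⟩
      have hp' : ((x₀, p.2) : ℤ×ℤ) = p := Prod.ext (hx0.1.symm) rfl
      have hq' : ((x₀, p.2+1) : ℤ×ℤ) = q := Prod.ext (hx0.2.symm) (by omega)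
      rw [hp', hq']
  · have hx0 : p.1 = x₀ ∨ q.1 = x₀ := by
      rcases hpq with he | he
      · left; rw [he, hi]
      · right; rw [he, hi]
    rcases h2 with h2 | h2
    · rcases hx0 with hx0 | hx0
      · left; right
        refine ⟨p.2, by omega, ?_⟩
        have hq' : ((x₀ - 1, p.2) : ℤ×ℤ) = q := Prod.ext (by omega) (by omega)
        have hp' : ((x₀, p.2) : ℤ×ℤ) = p := Prod.ext (by rw [hx0]) rfl
        rw [hq', hp']
        exact Sym2.eq_swap
      · right
        refine ⟨q.2, by omega, ?_⟩
        have hq' : ((x₀, q.2) : ℤ×ℤ) = q := Prod.ext (by rw [hx0]) rfl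
        have hp' : ((x₀ + 1, q.2) : ℤ×ℤ) = p := Prod.ext (by omega) (by omega)
        rw [hq', hp']
        exact Sym2.eq_swap
    · rcases hx0 with hx0 | hx0
      · right
        refine ⟨p.2, by omega, ?_⟩
        have hp' : ((x₀, p.2) : ℤ×ℤ) = p := Prod.ext (by rw [hx0]) rfl
        have hq' : ((x₀ + 1, p.2) : ℤ×ℤ) = q := Prod.ext (by omega) (by omega)
        rw [hp', hq']
      · left; right
        refine ⟨q.2, by omega, ?_⟩
        have hp' : ((x₀ - 1, q.2) : ℤ×ℤ) = p := Prod.ext (by omega) (by omega)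
        have hq' : ((x₀, q.2) : ℤ×ℤ) = q := Prod.ext (by rw [hx0]) rfl
        rw [hp', hq']

end GridAux

noncomputable section AuxDefs

def gminX (P : GridPath) : ℤ := Finset.univ.inf' Finset.univ_nonempty (fun i => (P.pts i).1)
def gmaxX (P : GridPath) : ℤ := Finset.univ.sup' Finset.univ_nonempty (fun i => (P.pts i).1)

variable {V : Type*} [Fintype V] [Nonempty V]

def gm0 (rep : V → GridPath) : ℤ :=
  Finset.univ.inf' Finset.univ_nonempty (fun v => gminX (rep v))

def glZ (rep : V → GridPath) (v : V) : ℤ :=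
  if (rep v).len = 0 then gm0 rep - ((Fintype.equivFin V v : ℕ) : ℤ) - 1 else gminX (rep v)

def grZ (rep : V → GridPath) (v : V) : ℤ :=
  if (rep v).len = 0 then gm0 rep - ((Fintype.equivFin V v : ℕ) : ℤ) - 1 else gmaxX (rep v)

def gH (rep : V → GridPath) : SimpleGraph V where
  Adj v w := v ≠ w ∧
    (Set.Icc ((glZ rep v : ℝ)) ((grZ rep v : ℝ)) ∩
     Set.Icc ((glZ rep w : ℝ)) ((grZ rep w : ℝ))).Nonempty
  symm := by constructor; rintro v w ⟨h1, h2⟩; exact ⟨h1.symm, by rwa [Set.inter_comm]⟩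
  loopless := by constructor; rintro v ⟨h1, _⟩; exact h1 rfl

def gkey (rep : V → GridPath) (v : V) : ℤ :=
  ((Fintype.card V : ℤ) + 1) * glZ rep v + ((Fintype.equivFin V v : ℕ) : ℤ)

def gord (rep : V → GridPath) (v : V) : ℕ :=
  (Finset.univ.filter (fun u => gkey rep u < gkey rep v)).card

end AuxDefs

section AuxLemmas
variable {V : Type*} [Fintype V] [Nonempty V] (rep : V → GridPath)

lemma gminX_le (P : GridPath) (i : Fin (P.len + 1)) : gminX P ≤ (P.pts i).1 :=
  Finset.inf'_le _ (Finset.mem_univ i)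

lemma le_gmaxX (P : GridPath) (i : Fin (P.len + 1)) : (P.pts i).1 ≤ gmaxX P := by
  unfold gmaxX
  exact Finset.le_sup' (fun i => (P.pts i).1) (Finset.mem_univ i)

lemma gminX_le_gmaxX (P : GridPath) : gminX P ≤ gmaxX P :=
  le_trans (gminX_le P 0) (le_gmaxX P 0)

lemma gminX_attained (P : GridPath) : ∃ i, (P.pts i).1 = gminX P := by
  obtain ⟨i, _, hi⟩ := Finset.exists_mem_eq_inf' (Finset.univ_nonempty)
    (fun i : Fin (P.len+1) => (P.pts i).1)
  exact ⟨i, hi.symm⟩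

lemma gmaxX_attained (P : GridPath) : ∃ i, (P.pts i).1 = gmaxX P := by
  obtain ⟨i, _, hi⟩ := Finset.exists_mem_eq_sup' (Finset.univ_nonempty)
    (fun i : Fin (P.len+1) => (P.pts i).1)
  exact ⟨i, hi.symm⟩

lemma gm0_le (v : V) : gm0 rep ≤ gminX (rep v) :=
  Finset.inf'_le _ (Finset.mem_univ v)

lemma glZ_le_grZ (v : V) : glZ rep v ≤ grZ rep v := by
  by_cases hd : (rep v).len = 0 <;>
    simp [glZ, grZ, hd, gminX_le_gmaxX]

lemma glZ_lt_gm0 (v : V) (hd : (rep v).len = 0) : glZ rep v < gm0 rep := by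
  have h1 : (0:ℤ) ≤ ((Fintype.equivFin V v : ℕ) : ℤ) := Int.natCast_nonneg _
  simp only [glZ, if_pos hd]
  omega

lemma gH_adj (v w : V) : (gH rep).Adj v w ↔ v ≠ w ∧
    (Set.Icc ((glZ rep v : ℝ)) ((grZ rep v : ℝ)) ∩
     Set.Icc ((glZ rep w : ℝ)) ((grZ rep w : ℝ))).Nonempty := Iff.rfl

lemma gH_adj_int {v w : V} (hadj : (gH rep).Adj v w) :
    v ≠ w ∧ glZ rep v ≤ grZ rep w ∧ glZ rep w ≤ grZ rep v := by
  obtain ⟨hne, t, htv, htw⟩ := (gH_adj rep v w).1 hadj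
  rw [Set.mem_Icc] at htv htw
  refine ⟨hne, ?_, ?_⟩
  · exact_mod_cast le_trans htv.1 htw.2
  · exact_mod_cast le_trans htw.1 htv.2

lemma gkey_lt {u v : V} (h : glZ rep u < glZ rep v) : gkey rep u < gkey rep v := by
  have h1 : ((Fintype.equivFin V u : ℕ) : ℤ) < (Fintype.card V : ℤ) + 1 := by
    have := (Fintype.equivFin V u).isLt
    omega
  have h2 : (0:ℤ) ≤ ((Fintype.equivFin V u : ℕ) : ℤ) := Int.natCast_nonneg _
  have h3 : (0:ℤ) ≤ ((Fintype.equivFin V v : ℕ) : ℤ) := Int.natCast_nonneg _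
  have h4 : ((Fintype.card V : ℤ) + 1) * (glZ rep u + 1) ≤
      ((Fintype.card V : ℤ) + 1) * glZ rep v := by
    apply mul_le_mul_of_nonneg_left (by omega) (by omega)
  simp only [gkey]
  nlinarith

lemma gkey_le {u v : V} (h : gkey rep u < gkey rep v) : glZ rep u ≤ glZ rep v := by
  by_contra hcon
  push_neg at hcon
  exact absurd (gkey_lt rep hcon) (by omega)

lemma gkey_inj : Function.Injective (gkey rep) := by
  intro u v huv
  by_contra hne
  have he : Fintype.equivFin V u ≠ Fintype.equivFin V v :=
    fun hh => hne ((Fintype.equivFin V).injective hh)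
  have hlZe : glZ rep u = glZ rep v := by
    rcases lt_trichotomy (glZ rep u) (glZ rep v) with hlt|heq|hlt
    · exact absurd (gkey_lt rep hlt) (by omega)
    · exact heq
    · exact absurd (gkey_lt rep hlt) (by omega)
  have h1 : ((Fintype.equivFin V u : ℕ) : ℤ) = ((Fintype.equivFin V v : ℕ) : ℤ) := by
    simp only [gkey, hlZe] at huv
    omega
  exact he (Fin.ext (by exact_mod_cast h1))

lemma gord_lt {u v : V} (h : gkey rep u < gkey rep v) : gord rep u < gord rep v := by
  classical
  simp only [gord]
  apply Finset.card_lt_card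
  rw [Finset.ssubset_iff_of_subset]
  · refine ⟨u, by simp [h], by simp⟩
  · intro w hw
    simp only [Finset.mem_filter, Finset.mem_univ, true_and] at hw ⊢
    omega

lemma gord_le {u v : V} (h : gord rep u < gord rep v) : gkey rep u < gkey rep v := by
  by_contra hcon
  push_neg at hcon
  have : gord rep v ≤ gord rep u := by
    apply Finset.card_le_card
    intro w hw
    simp only [Finset.mem_filter, Finset.mem_univ, true_and] at hw ⊢
    omega
  omega

lemma gord_inj : Function.Injective (gord rep) := by
  intro u v h
  by_contra hne
  have hk : gkey rep u ≠ gkey rep v := fun hk => hne (gkey_inj rep hk)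
  rcases hk.lt_or_gt with hlt|hlt
  · exact absurd (gord_lt rep hlt) (by omega)
  · exact absurd (gord_lt rep hlt) (by omega)

end AuxLemmas

/-- If `G` has an EPG-representation in a grid with `h` rows in which every grid-edge
belongs to at most `c` vertex-paths, then `pw(G) ≤ c(3h-1) - 1`. -/
theorem stmt3 {V : Type*} [Fintype V] (G : SimpleGraph V) (c h : ℕ)
    (rep : V → GridPath) (hrep : IsEPGRep G rep)
    (hrows : ∀ v, ∀ p ∈ (rep v).points, 1 ≤ p.2 ∧ p.2 ≤ (h : ℤ))
    (hc : ∀ e : Sym2 (ℤ × ℤ), {v : V | e ∈ (rep v).edges}.ncard ≤ c) :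
    pwLE G (c * (3 * h - 1) - 1) := by
  classical
  rcases isEmpty_or_nonempty V with hV | hV
  · exact ⟨G, le_rfl,
      ⟨fun _ => 0, fun _ => 0, fun v => le_rfl, fun v w => isEmptyElim v⟩,
      ⟨SimpleGraph.Coloring.mk (fun v => isEmptyElim v) (fun {v w} _ => isEmptyElim v)⟩⟩
  refine ⟨gH rep, ?_, ⟨fun v => ((glZ rep v : ℝ)), fun v => ((grZ rep v : ℝ)),
    fun v => by simp only []; exact_mod_cast glZ_le_grZ rep v, fun v w => gH_adj rep v w⟩, ?_⟩
  · -- G ≤ gH rep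
    intro v w hvw
    obtain ⟨hne, ed, hev, hew⟩ := (hrep v w).1 hvw
    obtain ⟨i, hi⟩ := hev
    obtain ⟨j, hj⟩ := hew
    have hlenv : ¬((rep v).len = 0) := by have := i.isLt; omega
    have hlenw : ¬((rep w).len = 0) := by have := j.isLt; omega
    have heq : s((rep v).pts i.castSucc, (rep v).pts i.succ)
        = s((rep w).pts j.castSucc, (rep w).pts j.succ) := by rw [← hi, ← hj]
    rw [Sym2.eq_iff] at heq
    obtain ⟨a, ha_v, ha_w⟩ :
        ∃ a : ℤ × ℤ, (∃ iv, (rep v).pts iv = a) ∧ (∃ jw, (rep w).pts jw = a) := by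
      rcases heq with ⟨h1, _⟩ | ⟨h1, _⟩
      · exact ⟨_, ⟨_, rfl⟩, ⟨j.castSucc, h1.symm⟩⟩
      · exact ⟨_, ⟨_, rfl⟩, ⟨j.succ, h1.symm⟩⟩
    obtain ⟨iv, hiv⟩ := ha_v
    obtain ⟨jw, hjw⟩ := ha_w
    refine (gH_adj rep v w).2 ⟨hne, ⟨(a.1 : ℝ), ?_, ?_⟩⟩
    · rw [Set.mem_Icc]
      constructor
      · have hh : glZ rep v ≤ a.1 := by
          simp only [glZ, if_neg hlenv]
          rw [← hiv]; exact gminX_le _ iv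
        exact_mod_cast hh
      · have hh : a.1 ≤ grZ rep v := by
          simp only [grZ, if_neg hlenv]
          rw [← hiv]; exact le_gmaxX _ iv
        exact_mod_cast hh
    · rw [Set.mem_Icc]
      constructor
      · have hh : glZ rep w ≤ a.1 := by
          simp only [glZ, if_neg hlenw]
          rw [← hjw]; exact gminX_le _ jw
        exact_mod_cast hh
      · have hh : a.1 ≤ grZ rep w := by
          simp only [grZ, if_neg hlenw]
          rw [← hjw]; exact le_gmaxX _ jw
        exact_mod_cast hh
  · -- colourability
    apply greedy_colorable (gH rep) (gord rep) (gord_inj rep)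
    intro v
    have hnc : {u | (gH rep).Adj u v ∧ gord rep u < gord rep v}.ncard
        = (Finset.univ.filter (fun u => (gH rep).Adj u v ∧ gord rep u < gord rep v)).card := by
      rw [Set.ncard_eq_toFinset_card']
      congr 1
      ext u; simp
    rw [hnc]
    by_cases hdv : (rep v).len = 0
    · have hempty :
          (Finset.univ.filter (fun u => (gH rep).Adj u v ∧ gord rep u < gord rep v)) = ∅ := by
        rw [Finset.filter_eq_empty_iff]
        rintro u - ⟨hadj, -⟩
        obtain ⟨hne, h1, h2⟩ := gH_adj_int rep hadj
        have hrv : grZ rep v = glZ rep v := by simp [glZ, grZ, hdv]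
        have hlv : glZ rep v < gm0 rep := glZ_lt_gm0 rep v hdv
        by_cases hdu : (rep u).len = 0
        · have hru : grZ rep u = glZ rep u := by simp [glZ, grZ, hdu]
          have heqz : glZ rep u = glZ rep v := by omega
          have hcast : ((Fintype.equivFin V u : ℕ) : ℤ) = ((Fintype.equivFin V v : ℕ) : ℤ) := by
            simp only [glZ, if_pos hdu, if_pos hdv] at heqz
            omega
          exact hne ((Fintype.equivFin V).injective (Fin.ext (by exact_mod_cast hcast)))
        · have hlu : glZ rep u = gminX (rep u) := by simp [glZ, hdu]
          have hlu2 := glZ_lt_gm0 rep u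
          have hm := gm0_le rep u
          omega
      rw [hempty, Finset.card_empty]
      omega
    · set x₀ := gminX (rep v) with hx₀
      set E := Finset.univ.filter (fun u => (gH rep).Adj u v ∧ gord rep u < gord rep v) with hE
      set S := insert v E with hS
      have hSprop : ∀ u ∈ S, ¬((rep u).len = 0) ∧ gminX (rep u) ≤ x₀ ∧ x₀ ≤ gmaxX (rep u) := by
        intro u hu
        rw [hS, Finset.mem_insert] at hu
        rcases hu with rfl | hu
        · exact ⟨hdv, le_rfl, gminX_le_gmaxX _⟩
        · rw [hE, Finset.mem_filter] at hu
          obtain ⟨-, hadj, hord⟩ := hu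
          obtain ⟨hne, h1, h2⟩ := gH_adj_int rep hadj
          have hlv : glZ rep v = x₀ := by simp [glZ, hdv, hx₀]
          have hm0v := gm0_le rep v
          have hdu : ¬((rep u).len = 0) := by
            intro hdu
            have hru : grZ rep u = glZ rep u := by simp [glZ, grZ, hdu]
            have hlt := glZ_lt_gm0 rep u hdu
            omega
          have hlu : glZ rep u = gminX (rep u) := by simp [glZ, hdu]
          have hkey := gkey_le rep (gord_le rep hord)
          have hru : grZ rep u = gmaxX (rep u) := by simp [grZ, hdu]
          exact ⟨hdu, by omega, by omega⟩
      have hSedge : ∀ u ∈ S, ∃ ed ∈ Fset x₀ h, ed ∈ (rep u).edges := by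
        intro u hu
        obtain ⟨hdu, hmin, hmax⟩ := hSprop u hu
        apply edge_in_Fset (rep u) h x₀ (hrows u) (by omega)
        apply path_hits
        · obtain ⟨i, hi⟩ := gminX_attained (rep u); exact ⟨i, by omega⟩
        · obtain ⟨i, hi⟩ := gmaxX_attained (rep u); exact ⟨i, by omega⟩
      set f : V → Sym2 (ℤ × ℤ) := fun u =>
        if hu : ∃ ed ∈ Fset x₀ h, ed ∈ (rep u).edges then hu.choose else default with hf
      have hfS : ∀ u ∈ S, f u ∈ Fset x₀ h ∧ f u ∈ (rep u).edges := by
        intro u hu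
        have hex := hSedge u hu
        rw [hf]
        simp only [dif_pos hex]
        obtain ⟨hh1, hh2⟩ := hex.choose_spec
        exact ⟨hh1, hh2⟩
      have himg : S.image f ⊆ Fset x₀ h := by
        intro a ha
        obtain ⟨u, hu, rfl⟩ := Finset.mem_image.1 ha
        exact (hfS u hu).1
      have hcard : S.card ≤ c * (3 * h - 1) := by
        have h1 : S.card = ∑ a ∈ S.image f, (S.filter (fun u => f u = a)).card :=
          Finset.card_eq_sum_card_fiberwise (fun u hu => Finset.mem_image_of_mem f hu)
        have h2 : ∀ a ∈ S.image f, (S.filter (fun u => f u = a)).card ≤ c := by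
          intro a ha
          have hsub : S.filter (fun u => f u = a) ⊆ {u : V | a ∈ (rep u).edges}.toFinset := by
            intro u hu
            rw [Finset.mem_filter] at hu
            rw [Set.mem_toFinset]
            have hh := (hfS u hu.1).2
            rw [hu.2] at hh
            exact hh
          calc (S.filter (fun u => f u = a)).card ≤ _ := Finset.card_le_card hsub
            _ ≤ c := by rw [← Set.ncard_eq_toFinset_card']; exact hc a
        calc S.card = _ := h1
          _ ≤ ∑ _a ∈ S.image f, c := Finset.sum_le_sum h2
          _ = (S.image f).card * c := by rw [Finset.sum_const, smul_eq_mul]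
          _ ≤ (3 * h - 1) * c := by
              apply Nat.mul_le_mul_right
              exact le_trans (Finset.card_le_card himg) (Fset_card x₀ h)
          _ = c * (3 * h - 1) := Nat.mul_comm _ _
      have hvE : v ∉ E := by
        rw [hE]
        simp only [Finset.mem_filter]
        rintro ⟨-, hadj, -⟩
        exact ((gH rep).loopless.irrefl v) hadj
      have hScard : S.card = E.card + 1 := by
        rw [hS, Finset.card_insert_of_notMem hvE]
      omega
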